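/- arXiv:0810.5487 — 6 statements merged into one kernel-verified Lean document; each statement's English description precedes it below -/
import Mathlib

section
/- Let d ≥ 0 and i ≥ 1 be integers, and write d + 1 = qi + r where q ≥ 0 and 1 ≤ r ≤ i are integers. Let B_1, …, B_q be pairwise disjoint finite sets each of cardinality i + 1, let W be a finite set of cardinality r + 1 disjoint from all B_t, and let W' ⊆ W have cardinality r. Then for every integer j, N_j(B_1,…,B_q,W) = N_j(B_1,…,B_q,W') + N_{j−1}(B_1,…,B_q,W') + N_{j−r}(B_1,…,B_q). -/
/-- The join of the boundaries of the simplices on the (pairwise disjoint nonempty) sets in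
`Bs`: its faces are the subsets `F` of the union of the sets in `Bs` such that no `B ∈ Bs`
is contained in `F`. -/
def joinBoundaryFaces {α : Type*} [DecidableEq α] (Bs : List (Finset α)) :
    Finset (Finset α) :=
  (Bs.foldr (· ∪ ·) ∅).powerset.filter (fun F => ∀ B ∈ Bs, ¬ B ⊆ F)

/-- `N_j(Bs)`: the number of faces of cardinality `j + 1` (dimension `j`) of the join of the
boundaries of the simplices on the sets in `Bs`; in particular `N_{-1} = 1` and `N_j = 0` for
`j < -1`. -/
def Ncount {α : Type*} [DecidableEq α] (Bs : List (Finset α)) (j : ℤ) : ℕ :=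
  ((joinBoundaryFaces Bs).filter (fun F => (F.card : ℤ) = j + 1)).card

lemma mem_joinBoundaryFaces {α : Type*} [DecidableEq α] {Bs : List (Finset α)} {F : Finset α} :
    F ∈ joinBoundaryFaces Bs ↔ (∀ x ∈ F, ∃ B ∈ Bs, x ∈ B) ∧ ∀ B ∈ Bs, ¬ B ⊆ F := by
  have hU : ∀ x : α, x ∈ Bs.foldr (· ∪ ·) ∅ ↔ ∃ B ∈ Bs, x ∈ B := by
    intro x; induction Bs with
    | nil => simp
    | cons a l ih => simp [ih]
  rw [joinBoundaryFaces, Finset.mem_filter, Finset.mem_powerset]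
  constructor
  · rintro ⟨h1, h2⟩
    exact ⟨fun x hx => (hU x).1 (h1 hx), h2⟩
  · rintro ⟨h1, h2⟩
    exact ⟨fun x hx => (hU x).2 (h1 x hx), h2⟩

/-- the recurrence
`f_j(S(i,d)) = f_j(S(i,d-1)) + f_{j-1}(S(i,d-1)) + f_{j-r}(S(i,d-r))` for
`S(i,d) = ∂σ^i ∗ ⋯ ∗ ∂σ^i ∗ ∂σ^r` (`q` copies of `∂σ^i`), where `d + 1 = q·i + r`,
`1 ≤ r ≤ i`: here the `q` copies of `∂σ^i` are realized on pairwise disjoint vertex sets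
`B t` of cardinality `i + 1`, the factor `∂σ^r` on a set `W` of cardinality `r + 1` disjoint
from all `B t`, and `W' ⊆ W` has cardinality `r`. -/
theorem joinBoundary_face_recurrence {α : Type*} [DecidableEq α]
    (d i : ℕ) (hi : 1 ≤ i) (q r : ℕ) (hr1 : 1 ≤ r) (hri : r ≤ i)
    (hd : d + 1 = q * i + r)
    (B : Fin q → Finset α) (hBcard : ∀ t, (B t).card = i + 1)
    (hBdisj : ∀ s t, s ≠ t → Disjoint (B s) (B t))
    (W : Finset α) (hWcard : W.card = r + 1) (hWB : ∀ t, Disjoint W (B t))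
    (W' : Finset α) (hW' : W' ⊆ W) (hW'card : W'.card = r) (j : ℤ) :
    Ncount (List.ofFn B ++ [W]) j =
      Ncount (List.ofFn B ++ [W']) j + Ncount (List.ofFn B ++ [W']) (j - 1) +
        Ncount (List.ofFn B) (j - r) := by
  classical
  -- extract the extra vertex w
  obtain ⟨w, hwd⟩ : ∃ w, W \ W' = {w} := by
    apply Finset.card_eq_one.mp
    rw [Finset.card_sdiff_of_subset hW', hWcard, hW'card]; simp
  have hwW : w ∈ W := (Finset.mem_sdiff.mp (hwd ▸ Finset.mem_singleton_self w)).1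
  have hwW' : w ∉ W' := (Finset.mem_sdiff.mp (hwd ▸ Finset.mem_singleton_self w)).2
  have hWins : W = insert w W' := by
    ext x
    simp only [Finset.mem_insert]
    constructor
    · intro hx
      by_cases hx' : x ∈ W'
      · exact Or.inr hx'
      · left
        have : x ∈ W \ W' := Finset.mem_sdiff.mpr ⟨hx, hx'⟩
        simpa [hwd] using this
    · rintro (rfl | hx)
      · exact hwW
      · exact hW' hx
  have hwB : ∀ t, w ∉ B t := fun t => Finset.disjoint_left.mp (hWB t) hwW
  have hW'B : ∀ t, Disjoint W' (B t) := fun t => (hWB t).mono_left hW'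
  -- membership characterizations
  have hmem : ∀ (V : Finset α) (F : Finset α),
      F ∈ joinBoundaryFaces (List.ofFn B ++ [V]) ↔
        (∀ x ∈ F, (∃ t, x ∈ B t) ∨ x ∈ V) ∧ (∀ t, ¬ B t ⊆ F) ∧ ¬ V ⊆ F := by
    intro V F
    rw [mem_joinBoundaryFaces]
    simp only [List.mem_append, List.mem_ofFn, List.mem_singleton]
    constructor
    · rintro ⟨h1, h2⟩
      refine ⟨fun x hx => ?_, fun t => h2 (B t) (Or.inl ⟨t, rfl⟩), h2 V (Or.inr rfl)⟩
      obtain ⟨b, hb, hxb⟩ := h1 x hx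
      rcases hb with ⟨t, rfl⟩ | rfl
      · exact Or.inl ⟨t, hxb⟩
      · exact Or.inr hxb
    · rintro ⟨h1, h2, h3⟩
      refine ⟨fun x hx => ?_, ?_⟩
      · rcases h1 x hx with ⟨t, ht⟩ | hV
        · exact ⟨B t, Or.inl ⟨t, rfl⟩, ht⟩
        · exact ⟨V, Or.inr rfl, hV⟩
      · rintro b (⟨t, rfl⟩ | rfl)
        · exact h2 t
        · exact h3
  have hmemB : ∀ (F : Finset α),
      F ∈ joinBoundaryFaces (List.ofFn B) ↔
        (∀ x ∈ F, ∃ t, x ∈ B t) ∧ (∀ t, ¬ B t ⊆ F) := by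
    intro F
    rw [mem_joinBoundaryFaces]
    simp only [List.mem_ofFn]
    constructor
    · rintro ⟨h1, h2⟩
      refine ⟨fun x hx => ?_, fun t => h2 (B t) ⟨t, rfl⟩⟩
      obtain ⟨b, ⟨t, rfl⟩, hxb⟩ := h1 x hx
      exact ⟨t, hxb⟩
    · rintro ⟨h1, h2⟩
      refine ⟨fun x hx => ?_, ?_⟩
      · obtain ⟨t, ht⟩ := h1 x hx
        exact ⟨B t, ⟨t, rfl⟩, ht⟩
      · rintro b ⟨t, rfl⟩
        exact h2 t
  set S : Finset (Finset α) :=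
    (joinBoundaryFaces (List.ofFn B ++ [W])).filter (fun F => (F.card : ℤ) = j + 1) with hS
  set T1 : Finset (Finset α) :=
    (joinBoundaryFaces (List.ofFn B ++ [W'])).filter (fun F => (F.card : ℤ) = j + 1) with hT1
  set T2 : Finset (Finset α) :=
    (joinBoundaryFaces (List.ofFn B ++ [W'])).filter (fun F => (F.card : ℤ) = (j - 1) + 1)
    with hT2
  set T3 : Finset (Finset α) :=
    (joinBoundaryFaces (List.ofFn B)).filter (fun F => (F.card : ℤ) = (j - r) + 1) with hT3
  have hmemS : ∀ F, F ∈ S ↔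
      ((∀ x ∈ F, (∃ t, x ∈ B t) ∨ x ∈ W) ∧ (∀ t, ¬ B t ⊆ F) ∧ ¬ W ⊆ F) ∧
        (F.card : ℤ) = j + 1 := by
    intro F; rw [hS, Finset.mem_filter, hmem]
  -- split S by w ∈ F
  have hsplit1 : ((S.filter (fun F => w ∈ F)).card : ℕ) +
      (S.filter (fun F => w ∉ F)).card = S.card :=
    Finset.card_filter_add_card_filter_not _
  -- split the w ∉ F part by W' ⊆ F
  have hsplit2 : (((S.filter (fun F => w ∉ F)).filter (fun F => W' ⊆ F)).card : ℕ) +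
      ((S.filter (fun F => w ∉ F)).filter (fun F => ¬ W' ⊆ F)).card
      = (S.filter (fun F => w ∉ F)).card :=
    Finset.card_filter_add_card_filter_not _
  -- Part A1 : w ∉ F, W' ⊄ F  ↔  T1
  have hA1 : (S.filter (fun F => w ∉ F)).filter (fun F => ¬ W' ⊆ F) = T1 := by
    ext F
    rw [Finset.mem_filter, Finset.mem_filter, hmemS, hT1, Finset.mem_filter, hmem]
    constructor
    · rintro ⟨⟨⟨⟨h1, h2, h3⟩, hc⟩, hw⟩, hW'F⟩
      refine ⟨⟨fun x hx => ?_, h2, hW'F⟩, hc⟩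
      rcases h1 x hx with ht | hxW
      · exact Or.inl ht
      · right
        rw [hWins] at hxW
        rcases Finset.mem_insert.mp hxW with rfl | hx'
        · exact absurd hx hw
        · exact hx'
    · rintro ⟨⟨h1, h2, h3⟩, hc⟩
      have hwF : w ∉ F := by
        intro hwF
        rcases h1 w hwF with ⟨t, ht⟩ | hW'
        · exact hwB t ht
        · exact hwW' hW'
      refine ⟨⟨⟨⟨fun x hx => ?_, h2, fun hWF => hwF (hWF hwW)⟩, hc⟩, hwF⟩, h3⟩
      rcases h1 x hx with ht | hx'
      · exact Or.inl ht
      · exact Or.inr (hW' hx')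
  -- Part A2 : w ∉ F, W' ⊆ F  ↔  T3 via F ↦ F \ W'
  have hA2 : ((S.filter (fun F => w ∉ F)).filter (fun F => W' ⊆ F)).card = T3.card := by
    refine Finset.card_bij' (fun F _ => F \ W') (fun G _ => G ∪ W') ?hi ?hj ?li ?ri
    case hi =>
      intro F hF
      rw [Finset.mem_filter, Finset.mem_filter, hmemS] at hF
      obtain ⟨⟨⟨⟨h1, h2, h3⟩, hc⟩, hw⟩, hW'F⟩ := hF
      rw [hT3, Finset.mem_filter, hmemB]
      refine ⟨⟨fun x hx => ?_, fun t hBt => ?_⟩, ?_⟩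
      · obtain ⟨hxF, hxW'⟩ := Finset.mem_sdiff.mp hx
        rcases h1 x hxF with ht | hxW
        · exact ht
        · exfalso
          rw [hWins] at hxW
          rcases Finset.mem_insert.mp hxW with rfl | hx'
          · exact hw hxF
          · exact hxW' hx'
      · exact h2 t (hBt.trans Finset.sdiff_subset)
      · rw [Finset.cast_card_sdiff hW'F, hc, hW'card]; ring
    case hj =>
      intro G hG
      rw [hT3, Finset.mem_filter, hmemB] at hG
      obtain ⟨⟨h1, h2⟩, hc⟩ := hG
      have hdisj : Disjoint G W' := by
        rw [Finset.disjoint_left]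
        intro x hxG hxW'
        obtain ⟨t, ht⟩ := h1 x hxG
        exact Finset.disjoint_left.mp (hW'B t) hxW' ht
      rw [Finset.mem_filter, Finset.mem_filter, hmemS]
      have hwG : w ∉ G := fun hwG => by
        obtain ⟨t, ht⟩ := h1 w hwG; exact hwB t ht
      refine ⟨⟨⟨⟨fun x hx => ?_, fun t hBt => ?_, fun hWs => ?_⟩, ?_⟩, ?_⟩, ?_⟩
      · rcases Finset.mem_union.mp hx with hxG | hxW'
        · exact Or.inl (h1 x hxG)
        · exact Or.inr (hW' hxW')
      · apply h2 t
        intro x hx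
        rcases Finset.mem_union.mp (hBt hx) with hxG | hxW'
        · exact hxG
        · exact absurd hx (Finset.disjoint_left.mp (hW'B t) hxW')
      · have := hWs hwW
        rcases Finset.mem_union.mp this with hxG | hxW'
        · exact hwG hxG
        · exact hwW' hxW'
      · rw [Finset.card_union_of_disjoint hdisj, Nat.cast_add, hc, hW'card]; ring
      · simp [hwG, hwW']
      · exact Finset.subset_union_right
    case li =>
      intro F hF
      rw [Finset.mem_filter, Finset.mem_filter] at hF
      exact Finset.sdiff_union_of_subset hF.2
    case ri =>
      intro G hG
      rw [hT3, Finset.mem_filter, hmemB] at hG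
      have hdisj : Disjoint G W' := by
        rw [Finset.disjoint_left]
        intro x hxG hxW'
        obtain ⟨t, ht⟩ := hG.1.1 x hxG
        exact Finset.disjoint_left.mp (hW'B t) hxW' ht
      show (G ∪ W') \ W' = G
      rw [Finset.union_sdiff_distrib, Finset.sdiff_eq_self_of_disjoint hdisj]
      simp
  -- Part C : w ∈ F  ↔  T2 via F ↦ F.erase w
  have hC : (S.filter (fun F => w ∈ F)).card = T2.card := by
    refine Finset.card_bij' (fun F _ => F.erase w) (fun G _ => insert w G) ?hi ?hj ?li ?ri
    case hi =>
      intro F hF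
      rw [Finset.mem_filter, hmemS] at hF
      obtain ⟨⟨⟨h1, h2, h3⟩, hc⟩, hw⟩ := hF
      rw [hT2, Finset.mem_filter, hmem]
      refine ⟨⟨fun x hx => ?_, fun t hBt => ?_, fun hW's => ?_⟩, ?_⟩
      · obtain ⟨hxne, hxF⟩ := Finset.mem_erase.mp hx
        rcases h1 x hxF with ht | hxW
        · exact Or.inl ht
        · right
          rw [hWins] at hxW
          rcases Finset.mem_insert.mp hxW with rfl | hx'
          · exact absurd rfl hxne
          · exact hx'
      · exact h2 t (hBt.trans (Finset.erase_subset _ _))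
      · apply h3
        rw [hWins]
        intro x hx
        rcases Finset.mem_insert.mp hx with rfl | hx'
        · exact hw
        · exact (Finset.erase_subset _ _) (hW's hx')
      · rw [Finset.cast_card_erase_of_mem hw, hc]; ring
    case hj =>
      intro G hG
      rw [hT2, Finset.mem_filter, hmem] at hG
      obtain ⟨⟨h1, h2, h3⟩, hc⟩ := hG
      have hwG : w ∉ G := by
        intro hwG
        rcases h1 w hwG with ⟨t, ht⟩ | hW'
        · exact hwB t ht
        · exact hwW' hW'
      rw [Finset.mem_filter, hmemS]
      refine ⟨⟨⟨fun x hx => ?_, fun t hBt => ?_, fun hWs => ?_⟩, ?_⟩, Finset.mem_insert_self _ _⟩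
      · rcases Finset.mem_insert.mp hx with rfl | hxG
        · exact Or.inr hwW
        · rcases h1 x hxG with ht | hx'
          · exact Or.inl ht
          · exact Or.inr (hW' hx')
      · apply h2 t
        intro x hx
        rcases Finset.mem_insert.mp (hBt hx) with rfl | hxG
        · exact absurd hx (hwB t)
        · exact hxG
      · apply h3
        intro x hx
        have : x ∈ insert w G := hWs (hW' hx)
        rcases Finset.mem_insert.mp this with rfl | hxG
        · exact absurd hx hwW'
        · exact hxG
      · rw [Finset.card_insert_of_notMem hwG, Nat.cast_add, hc]; ring
    case li =>
      intro F hF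
      rw [Finset.mem_filter] at hF
      exact Finset.insert_erase hF.2
    case ri =>
      intro G hG
      rw [hT2, Finset.mem_filter, hmem] at hG
      have hwG : w ∉ G := by
        intro hwG
        rcases hG.1.1 w hwG with ⟨t, ht⟩ | hW'
        · exact hwB t ht
        · exact hwW' hW'
      exact Finset.erase_insert hwG
  -- assemble
  show S.card = T1.card + T2.card + T3.card
  rw [← hsplit1, ← hsplit2, hA1, hA2, hC]
  ring
end

section
/- Let B_1, …, B_q be pairwise disjoint nonempty finite sets, let s ≥ 0 be an integer, and let W be a finite set of cardinality s + 1 disjoint from all B_t. Then for every integer j, N_{j+s}(B_1,…,B_q,W) ≥ N_j(B_1,…,B_q). -/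
lemma mem_foldr_union {α : Type*} [DecidableEq α] (l : List (Finset α)) (x : α) :
    x ∈ l.foldr (· ∪ ·) ∅ ↔ ∃ b ∈ l, x ∈ b := by
  induction l with
  | nil => simp
  | cons a l ih => simp [ih]

/-- if `B_1, …, B_q` are pairwise disjoint nonempty finite sets, `s ≥ 0`, and
`W` is a finite set of cardinality `s + 1` disjoint from all `B t`, then for every integer
`j`, `N_{j+s}(B_1,…,B_q,W) ≥ N_j(B_1,…,B_q)`. -/
theorem joinBoundary_face_mono {α : Type*} [DecidableEq α]
    (q : ℕ) (B : Fin q → Finset α) (hBne : ∀ t, (B t).Nonempty)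
    (hBdisj : ∀ s t, s ≠ t → Disjoint (B s) (B t))
    (s : ℕ) (W : Finset α) (hWcard : W.card = s + 1) (hWB : ∀ t, Disjoint W (B t))
    (j : ℤ) :
    Ncount (List.ofFn B ++ [W]) (j + s) ≥ Ncount (List.ofFn B) j := by
  obtain ⟨T, hTW, hTcard⟩ := Finset.exists_subset_card_eq (s := W) (n := s) (by omega)
  have hTneW : T ≠ W := by
    intro h; rw [h, hWcard] at hTcard; omega
  unfold Ncount joinBoundaryFaces
  apply Finset.card_le_card_of_injOn (fun F => F ∪ T)
  · intro F hF
    simp only [Finset.mem_coe, Finset.mem_filter, Finset.mem_powerset] at hF ⊢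
    obtain ⟨⟨hFsub, hFnot⟩, hFcard⟩ := hF
    have hFdisjW : ∀ x ∈ F, x ∉ W := by
      intro x hx hxW
      have := hFsub hx
      rw [mem_foldr_union] at this
      obtain ⟨b, hb, hxb⟩ := this
      rw [List.mem_ofFn] at hb
      obtain ⟨t, rfl⟩ := hb
      exact Finset.disjoint_left.mp (hWB t) hxW hxb
    have hFT : Disjoint F T := by
      rw [Finset.disjoint_left]
      intro x hx hxT
      exact hFdisjW x hx (hTW hxT)
    refine ⟨⟨?_, ?_⟩, ?_⟩
    · intro x hx
      rw [mem_foldr_union]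
      rcases Finset.mem_union.mp hx with h | h
      · obtain ⟨b, hb, hxb⟩ := (mem_foldr_union _ x).mp (hFsub h)
        exact ⟨b, by simp [hb], hxb⟩
      · exact ⟨W, by simp, hTW h⟩
    · intro b hb hbsub
      rcases List.mem_append.mp hb with hb | hb
      · apply hFnot b hb
        rw [List.mem_ofFn] at hb
        obtain ⟨t, rfl⟩ := hb
        intro x hx
        rcases Finset.mem_union.mp (hbsub hx) with h | h
        · exact h
        · exact (Finset.disjoint_left.mp (hWB t) (hTW h) hx).elim
      · simp only [List.mem_singleton] at hb
        subst hb
        apply hTneW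
        apply Finset.Subset.antisymm hTW
        intro x hx
        rcases Finset.mem_union.mp (hbsub hx) with h | h
        · exact (hFdisjW x h hx).elim
        · exact h
    · rw [Finset.card_union_of_disjoint hFT, hTcard]
      push_cast
      omega
  · intro F₁ hF₁ F₂ hF₂ heq
    simp only [Finset.coe_filter, Set.mem_setOf_eq, Finset.mem_filter, Finset.mem_powerset] at hF₁ hF₂
    have heq' : F₁ ∪ T = F₂ ∪ T := heq
    have disj : ∀ F : Finset α, F ⊆ (List.ofFn B).foldr (· ∪ ·) ∅ → Disjoint F T := by
      intro F hFsub
      rw [Finset.disjoint_left]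
      intro x hx hxT
      obtain ⟨b, hb, hxb⟩ := (mem_foldr_union _ x).mp (hFsub hx)
      rw [List.mem_ofFn] at hb
      obtain ⟨t, rfl⟩ := hb
      exact Finset.disjoint_left.mp (hWB t) (hTW hxT) hxb
    have d1 := disj F₁ hF₁.1.1
    have d2 := disj F₂ hF₂.1.1
    ext x
    constructor
    · intro hx
      rcases Finset.mem_union.mp (heq' ▸ Finset.mem_union_left T hx) with h | h
      · exact h
      · exact (Finset.disjoint_left.mp d1 hx h).elim
    · intro hx
      rcases Finset.mem_union.mp (heq' ▸ Finset.mem_union_left T hx) with h | h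
      · exact h
      · exact (Finset.disjoint_left.mp d2 hx h).elim
end

section
/- Let d ≥ 0 and i ≥ 1 be integers. Then there exist natural numbers c_0, c_1, …, c_{⌊(d+1)/2⌋} such that P_{d,i}(t) = ∑_{j=0}^{⌊(d+1)/2⌋} c_j · t^j · P_{d−2j, i+1}(t) in ℤ[t]. -/
open Polynomial Finset

/-- The polynomial `P_{d,i}(t) ∈ ℤ[t]`: `P_{d,i} = 1` for `d < 0` (in particular `P_{-1,i} = 1`),
and for `d ≥ 0`, `P_{d,i} = (1 + t + ⋯ + t^i)^q (1 + t + ⋯ + t^r)` where `q ≥ 0` and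
`1 ≤ r ≤ i` are the unique integers with `d + 1 = q·i + r` (for `i ≥ 1`, `q = ⌊d/i⌋` and
`r = (d mod i) + 1`). -/
noncomputable def Ppoly (d : ℤ) (i : ℕ) : ℤ[X] :=
  if d < 0 then 1
  else (∑ k ∈ range (i + 1), X ^ k) ^ (d.toNat / i) *
    (∑ k ∈ range (d.toNat % i + 2), X ^ k)

noncomputable def sgeom (m : ℕ) : ℤ[X] := ∑ k ∈ range (m + 1), X ^ k

lemma sgeom_mul (m : ℕ) : sgeom m * (X - 1) = X ^ (m + 1) - 1 := geom_sum_mul X (m + 1)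

lemma sgeom_zero : sgeom 0 = 1 := by simp [sgeom]

lemma key (b c : ℕ) :
    sgeom (b + 1 + c) * sgeom (b + 1) =
      sgeom (b + 1 + c + 1) * sgeom b + X ^ (b + 1) * sgeom c := by
  have h := sgeom_mul
  apply mul_right_cancel₀ (pow_ne_zero 2 (show ((X : ℤ[X]) - 1) ≠ 0 from X_sub_C_ne_zero 1))
  linear_combination (sgeom (b+1) * (X - 1)) * h (b+1+c) + ((X:ℤ[X])^(b+c+2) - 1) * h (b+1)
    - (sgeom b * (X - 1)) * h (b+1+c+1) - ((X:ℤ[X])^(b+c+3) - 1) * h b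
    - ((X:ℤ[X])^(b+1) * (X - 1)) * h c

lemma Ppoly_repr (i q r : ℕ) (hi : 1 ≤ i) (hr : r ≤ i) :
    Ppoly ((q : ℤ) * i + r - 1) i = sgeom i ^ q * sgeom r := by
  rcases Nat.eq_zero_or_pos r with hr0 | hr1
  · subst hr0
    rcases Nat.eq_zero_or_pos q with hq0 | hq1
    · subst hq0; simp [Ppoly, sgeom]
    · have hpos : ¬ ((q : ℤ) * i + 0 - 1 < 0) := by
        push_neg
        have : (1:ℤ) * 1 ≤ (q:ℤ) * i := by
          apply mul_le_mul <;> simp [hi, hq1] <;> omega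
        omega
      rw [Ppoly, if_neg (by push_cast at hpos ⊢; omega)]
      have hn : ((q : ℤ) * i + (0:ℕ) - 1).toNat = (i - 1) + i * (q - 1) := by
        have h1 : i * (q-1) + i = i * q := by
          have : q - 1 + 1 = q := by omega
          calc i * (q-1) + i = i * (q - 1 + 1) := by ring
          _ = i * q := by rw [this]
        have h2 : (1:ℤ) ≤ (q:ℤ)*i := by
          have : (1:ℤ) * 1 ≤ (q:ℤ) * i := by
            apply mul_le_mul <;> simp [hi, hq1] <;> omega
          linarith
        have h3 : ((q : ℤ) * i + (0:ℕ) - 1).toNat = (q*i - 1 : ℕ) := by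
          have : ((q*i : ℕ) : ℤ) = (q:ℤ) * i := by push_cast; ring
          omega
        rw [h3]; have h4 : i * q = q * i := Nat.mul_comm i q
        omega
      rw [hn]
      rw [Nat.add_mul_div_left _ _ (by omega), Nat.add_mul_mod_self_left]
      rw [Nat.div_eq_of_lt (by omega), Nat.mod_eq_of_lt (by omega)]
      have h5 : i - 1 + 2 = i + 1 := by omega
      rw [h5]
      have h6 : sgeom i ^ q = sgeom i ^ (0 + (q-1)) * sgeom i * sgeom 0 := by
        rw [show (0 + (q-1)) = q - 1 from by omega]
        rw [show sgeom 0 = 1 from by simp [sgeom], mul_one, ← pow_succ,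
          show q - 1 + 1 = q from by omega]
      rw [h6]
      simp [sgeom]
  · have hpos : ¬ ((q : ℤ) * i + r - 1 < 0) := by
      push_neg
      have : (0:ℤ) ≤ (q:ℤ) * i := by positivity
      omega
    rw [Ppoly, if_neg hpos]
    have hn : ((q : ℤ) * i + r - 1).toNat = (r - 1) + i * q := by
      have : ((r - 1 + i * q : ℕ) : ℤ) = (q:ℤ)*i + r - 1 := by
        have h7 : ((r - 1 : ℕ) : ℤ) = (r:ℤ) - 1 := by omega
        push_cast [h7]; ring
      omega
    rw [hn, Nat.add_mul_div_left _ _ (by omega), Nat.add_mul_mod_self_left,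
      Nat.div_eq_of_lt (by omega), Nat.mod_eq_of_lt (by omega),
      Nat.zero_add, show r - 1 + 2 = r + 1 from by omega]
    rfl

lemma exists_repr (m : ℕ) (hm : 1 ≤ m) (e : ℤ) (he : -1 ≤ e) :
    ∃ q r : ℕ, r ≤ m ∧ e = (q : ℤ) * m + r - 1 := by
  rcases he.eq_or_lt with h | h
  · exact ⟨0, 0, Nat.zero_le _, by omega⟩
  · have h0 : 0 ≤ e := by omega
    obtain ⟨n, rfl⟩ := Int.eq_ofNat_of_zero_le h0
    refine ⟨n / m, n % m + 1, by have := Nat.mod_lt n (show 0 < m by omega); omega, ?_⟩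
    have h1 := Nat.div_add_mod n m
    have h3 : (n : ℤ) = (m:ℤ) * ((n/m : ℕ):ℤ) + ((n % m : ℕ):ℤ) := by exact_mod_cast h1.symm
    have h4 : ((n % m + 1 : ℕ) : ℤ) = ((n % m : ℕ):ℤ) + 1 := by push_cast; ring
    rw [h4, h3]; ring

lemma Ppoly_shift (i : ℕ) (f : ℤ) (hf : -1 ≤ f) :
    sgeom (i + 1) * Ppoly f (i + 1) = Ppoly (f + (i + 1)) (i + 1) := by
  obtain ⟨q, r, hr, rfl⟩ := exists_repr (i + 1) (by omega) f hf
  rw [Ppoly_repr (i+1) q r (by omega) hr,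
    show (q:ℤ) * (↑(i+1):ℤ) + ↑r - 1 + ((i:ℤ)+1) = ((q+1:ℕ):ℤ) * (↑(i+1):ℤ) + ↑r - 1 by push_cast; ring,
    Ppoly_repr (i+1) (q+1) r (by omega) hr, pow_succ]
  ring

lemma Ppoly_neg (d : ℤ) (i : ℕ) (h : d < 0) : Ppoly d i = 1 := by simp [Ppoly, h]

lemma claim (i : ℕ) (hi : 1 ≤ i) :
    ∀ n : ℕ, ∀ e : ℤ, -1 ≤ e → (e + 1).toNat = n →
    ∃ c : ℕ → ℕ, Ppoly e i =
      ∑ j ∈ range ((e + 1).toNat / 2 + 1),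
        (c j : ℤ[X]) * X ^ j * Ppoly (e - 2 * j) (i + 1) := by
  intro n
  induction n using Nat.strong_induction_on with
  | _ n IH =>
    intro e he hn
    rcases he.eq_or_lt with h1 | h1
    · -- e = -1
      refine ⟨fun _ => 1, ?_⟩
      rw [← h1]
      norm_num [Ppoly_neg _ _ (show (-1:ℤ) < 0 by norm_num)]
    · obtain ⟨d, rfl⟩ := Int.eq_ofNat_of_zero_le (show (0:ℤ) ≤ e by omega)
      rw [show ((d:ℤ) + 1).toNat = d + 1 from by omega]
      rcases lt_or_ge d i with hdi | hdi
      · -- base case: d < i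
        refine ⟨fun j => if j = 0 then 1 else 0, ?_⟩
        have hP1 : Ppoly (d:ℤ) i = sgeom (d + 1) := by
          rw [show ((d:ℤ)) = ((0:ℕ):ℤ) * (i:ℤ) + ((d+1:ℕ):ℤ) - 1 from by push_cast; ring,
            Ppoly_repr i 0 (d+1) hi (by omega), pow_zero, one_mul]
        have hP2 : Ppoly (d:ℤ) (i+1) = sgeom (d + 1) := by
          rw [show ((d:ℤ)) = ((0:ℕ):ℤ) * ((i+1:ℕ):ℤ) + ((d+1:ℕ):ℤ) - 1 from by push_cast; ring,
            Ppoly_repr (i+1) 0 (d+1) (by omega) (by omega), pow_zero, one_mul]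
        rw [hP1, Finset.sum_eq_single 0 (fun b _ hb => by simp [hb]) (fun h => by simp at h)]
        simp [hP2]
      · -- inductive case: i ≤ d
        obtain ⟨q', r', hr', hd⟩ : ∃ q' r', r' < i ∧ d = q' * i + i + r' := by
          refine ⟨d / i - 1, d % i, Nat.mod_lt _ (by omega), ?_⟩
          have h1 := Nat.div_add_mod d i
          have h2 : 1 ≤ d / i := (Nat.one_le_div_iff (by omega)).mpr hdi
          have h3 : (d / i - 1) * i + i = (d / i) * i := by
            have h4 : d / i - 1 + 1 = d / i := by omega
            calc (d / i - 1) * i + i = (d / i - 1 + 1) * i := by ring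
            _ = (d / i) * i := by rw [h4]
          have h5 : i * (d / i) = (d / i) * i := Nat.mul_comm i (d / i)
          omega
        have hdz : (d:ℤ) = (q':ℤ) * i + i + r' := by exact_mod_cast hd
        set e1 : ℤ := (d:ℤ) - i - 1 with he1
        set e2 : ℤ := (d:ℤ) - 2 * (r' + 1) with he2
        have he1' : -1 ≤ e1 := by omega
        have he2' : -1 ≤ e2 := by
          have : (0:ℤ) ≤ (q':ℤ) * i := by positivity
          omega
        -- Step C
        have hC : sgeom i ^ q' * sgeom r' = Ppoly e1 i := by
          rw [show e1 = (q':ℤ) * i + (r':ℤ) - 1 from by rw [he1, hdz]; ring,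
            Ppoly_repr i q' r' hi (by omega)]
        -- Step D
        have hD : sgeom i ^ q' * sgeom (i - (r' + 1)) = Ppoly e2 i := by
          rw [show e2 = (q':ℤ) * i + ((i - (r'+1) : ℕ):ℤ) - 1 from by
              have h5 : ((i - (r'+1) : ℕ):ℤ) = (i:ℤ) - r' - 1 := by omega
              rw [he2, hdz, h5]; ring,
            Ppoly_repr i q' (i - (r'+1)) hi (by omega)]
        -- Step A + B: main recursion
        have hmain : Ppoly (d:ℤ) i =
            sgeom (i+1) * Ppoly e1 i + X ^ (r' + 1) * Ppoly e2 i := by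
          rw [show ((d:ℤ)) = ((q'+1:ℕ):ℤ) * (i:ℤ) + ((r'+1:ℕ):ℤ) - 1 from by
              push_cast; rw [hdz]; ring,
            Ppoly_repr i (q'+1) (r'+1) hi (by omega)]
          have hk := key r' (i - (r'+1))
          rw [show r' + 1 + (i - (r'+1)) = i from by omega] at hk
          rw [← hC, ← hD, pow_succ, mul_assoc, hk]
          ring
        obtain ⟨c1, hc1⟩ := IH (d - i) (by omega) e1 he1' (by omega)
        obtain ⟨c2, hc2⟩ := IH (d - 2 * r' - 1) (by omega) e2 he2' (by omega)
        rw [show (e1 + 1).toNat = d - i from by omega] at hc1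
        rw [show (e2 + 1).toNat = d - 2 * r' - 1 from by omega] at hc2
        set rr := r' + 1 with hrr
        set n1 := (d - i) / 2 + 1 with hn1
        set n2 := (d - 2 * r' - 1) / 2 + 1 with hn2
        set N := (d + 1) / 2 + 1 with hN
        have hn1N : n1 ≤ N := by omega
        have hn2N : rr + n2 ≤ N := by omega
        refine ⟨fun j => (if j < n1 then c1 j else 0) +
          (if rr ≤ j ∧ j < rr + n2 then c2 (j - rr) else 0), ?_⟩
        have hsum1 : sgeom (i+1) * (∑ j ∈ range n1, (c1 j : ℤ[X]) * X ^ j * Ppoly (e1 - 2*j) (i+1))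
            = ∑ j ∈ range n1, (c1 j : ℤ[X]) * X ^ j * Ppoly ((d:ℤ) - 2*j) (i+1) := by
          rw [Finset.mul_sum]
          refine Finset.sum_congr rfl fun j hj => ?_
          simp only [mem_range] at hj
          have hj' : -1 ≤ e1 - 2 * (j:ℤ) := by omega
          rw [show sgeom (i+1) * ((c1 j : ℤ[X]) * X ^ j * Ppoly (e1 - 2*j) (i+1))
              = (c1 j : ℤ[X]) * X ^ j * (sgeom (i+1) * Ppoly (e1 - 2*j) (i+1)) from by ring,
            Ppoly_shift i _ hj',
            show e1 - 2*(j:ℤ) + ((i:ℤ)+1) = (d:ℤ) - 2*j from by rw [he1]; ring]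
        have hsum2 : X ^ rr * (∑ j ∈ range n2, (c2 j : ℤ[X]) * X ^ j * Ppoly (e2 - 2*j) (i+1))
            = ∑ j ∈ Finset.Ico rr (rr + n2), (c2 (j - rr) : ℤ[X]) * X ^ j * Ppoly ((d:ℤ) - 2*j) (i+1) := by
          rw [Finset.sum_Ico_eq_sum_range, show rr + n2 - rr = n2 from by omega, Finset.mul_sum]
          refine Finset.sum_congr rfl fun j hj => ?_
          rw [show rr + j - rr = j from by omega,
            show ((d:ℤ) - 2*((rr + j : ℕ):ℤ)) = e2 - 2*(j:ℤ) from by rw [he2, hrr]; push_cast; ring,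
            pow_add]
          ring
        rw [hmain, hc1, hc2, hsum1, hsum2]
        have hcast : ∀ j : ℕ, (((if j < n1 then c1 j else 0) +
            (if rr ≤ j ∧ j < rr + n2 then c2 (j - rr) else 0) : ℕ) : ℤ[X])
            = (if j < n1 then (c1 j : ℤ[X]) else 0) +
              (if rr ≤ j ∧ j < rr + n2 then (c2 (j - rr) : ℤ[X]) else 0) := by
          intro j
          push_cast [apply_ite (Nat.cast : ℕ → ℤ[X])]
          ring
        simp only [hcast, add_mul]
        rw [Finset.sum_add_distrib]
        congr 1
        · rw [← Finset.sum_subset (Finset.range_subset_range.mpr hn1N)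
            (fun x _ hx => by simp only [mem_range] at hx; rw [if_neg (by omega)]; ring)]
          refine Finset.sum_congr rfl fun j hj => ?_
          simp only [mem_range] at hj
          rw [if_pos hj]
        · rw [← Finset.sum_subset
            (show Finset.Ico rr (rr + n2) ⊆ range N from fun x hx => by
              simp only [Finset.mem_Ico] at hx; exact mem_range.mpr (by omega))
            (fun x _ hx => by simp only [Finset.mem_Ico] at hx; rw [if_neg (by omega)]; ring)]
          refine Finset.sum_congr rfl fun j hj => ?_
          simp only [Finset.mem_Ico] at hj
          rw [if_pos (by omega)]

/-- for `d ≥ 0` and `i ≥ 1` there are natural numbers `c_j` with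
`P_{d,i}(t) = ∑_{j=0}^{⌊(d+1)/2⌋} c_j · t^j · P_{d-2j, i+1}(t)` in `ℤ[t]`. -/
theorem Ppoly_nonneg_comb_next (d i : ℕ) (hi : 1 ≤ i) :
    ∃ c : ℕ → ℕ, Ppoly d i =
      ∑ j ∈ range ((d + 1) / 2 + 1),
        (c j : ℤ[X]) * X ^ j * Ppoly ((d : ℤ) - 2 * j) (i + 1) := by
  obtain ⟨c, hc⟩ := claim i hi (d + 1) d (by omega) (by omega)
  refine ⟨c, ?_⟩
  rw [hc, show ((d:ℤ) + 1).toNat = d + 1 from by omega]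
end

section
/- Let d ≥ 0, d' ≥ 0 and i ≥ 1 be integers. Then there exist natural numbers c_0, …, c_{⌊(d+d'+2)/2⌋} such that P_{d,i}(t) · P_{d',i}(t) = ∑_{j=0}^{⌊(d+d'+2)/2⌋} c_j · t^j · P_{d+d'+1−2j, i}(t) in ℤ[t]. -/
open Polynomial Finset

noncomputable def S (n : ℕ) : ℤ[X] := ∑ k ∈ range n, X ^ k

lemma S_add (m n : ℕ) : S (m + n) = S m + X ^ m * S n := by
  rw [S, Finset.sum_range_add]
  simp [S, pow_add, Finset.mul_sum]

lemma S_one : S 1 = 1 := by simp [S]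

lemma S_succ' (n : ℕ) : S (n + 1) = 1 + X * S n := by
  rw [show n + 1 = 1 + n from by omega, S_add, S_one, pow_one]

lemma S_succ_mul_succ (a b : ℕ) :
    S (a + 1) * S (b + 1) = S (a + b + 1) + X * (S a * S b) := by
  have h5 : S a * (X - 1) = X ^ a - 1 := geom_sum_mul _ _
  rw [S_succ' a, S_succ' b, S_succ' (a + b), S_add]
  linear_combination X * S b * h5

lemma S_mul (a b : ℕ) :
    S a * S b = ∑ j ∈ range (min a b), X ^ j * S (a + b - 1 - 2 * j) := by
  induction a generalizing b with
  | zero => simp [S]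
  | succ a ih =>
    cases b with
    | zero => simp [S]
    | succ c =>
      rw [S_succ_mul_succ, ih, Finset.mul_sum,
        show min (a + 1) (c + 1) = min a c + 1 from by omega, Finset.sum_range_succ']
      rw [add_comm]
      refine congrArg₂ (· + ·) ?_ ?_
      · apply Finset.sum_congr rfl
        intro j hj
        rw [show a + 1 + (c + 1) - 1 - 2 * (j + 1) = a + c - 1 - 2 * j from by omega]
        ring
      · rw [show a + 1 + (c + 1) - 1 - 2 * 0 = a + c + 1 from by omega]
        simp

lemma Ppoly_nat (n i : ℕ) : Ppoly (n : ℤ) i = S (i + 1) ^ (n / i) * S (n % i + 2) := by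
  rw [Ppoly, if_neg (by omega)]
  simp [S]

lemma Ppoly_eq (i Q s : ℕ) (hi : 1 ≤ i) (hs : s ≤ i) :
    Ppoly ((Q : ℤ) * i + s - 1) i = S (i + 1) ^ Q * S (s + 1) := by
  by_cases h0 : Q = 0 ∧ s = 0
  · obtain ⟨rfl, rfl⟩ := h0
    norm_num [Ppoly, S_one]
  · have hQi : Q = 0 ∨ 1 * 1 ≤ Q * i := by
      rcases Nat.eq_zero_or_pos Q with h | h
      · exact Or.inl h
      · exact Or.inr (Nat.mul_le_mul h hi)
    have hn : 1 ≤ Q * i + s := by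
      rcases hQi with h | h
      · subst h; omega
      · omega
    have harg : (Q : ℤ) * i + s - 1 = ((Q * i + s - 1 : ℕ) : ℤ) := by
      rw [Nat.cast_sub hn]
      push_cast
      ring
    rw [harg, Ppoly_nat]
    rcases s with _ | t
    · -- s = 0, Q ≥ 1
      obtain ⟨Q', rfl⟩ : ∃ Q', Q = Q' + 1 := by
        rcases Nat.eq_zero_or_pos Q with h | h
        · exact absurd ⟨h, rfl⟩ h0
        · exact ⟨Q - 1, by omega⟩
      have hqi : (Q' + 1) * i = Q' * i + i := by ring
      have hrep : (Q' + 1) * i + 0 - 1 = (i - 1) + i * Q' := by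
        rw [hqi]; rw [Nat.mul_comm i Q']; omega
      rw [hrep, Nat.add_mul_div_left _ _ (by omega : 0 < i), Nat.div_eq_of_lt (by omega),
        Nat.add_mul_mod_self_left, Nat.mod_eq_of_lt (by omega),
        show i - 1 + 2 = i + 1 from by omega, S_one, mul_one, zero_add]
      rw [pow_succ]
    · -- s = t + 1
      have hrep : Q * i + (t + 1) - 1 = t + i * Q := by
        rw [Nat.mul_comm i Q]; omega
      rw [hrep, Nat.add_mul_div_left _ _ (by omega : 0 < i), Nat.div_eq_of_lt (by omega),
        Nat.add_mul_mod_self_left, Nat.mod_eq_of_lt (by omega), zero_add]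

/-- for `d, d' ≥ 0` and `i ≥ 1`, there are natural numbers `c_j` such that
`P_{d,i}(t) · P_{d',i}(t) = ∑_{j=0}^{⌊(d+d'+2)/2⌋} c_j · t^j · P_{d+d'+1-2j, i}(t)` in
`ℤ[t]`, i.e. the product is a nonnegative integer combination of the basis `B_{d+d'+1,i}`. -/
theorem Ppoly_product_nonneg_comb (d d' i : ℕ) (hi : 1 ≤ i) :
    ∃ c : ℕ → ℕ, Ppoly d i * Ppoly d' i =
      ∑ j ∈ range ((d + d' + 2) / 2 + 1),
        (c j : ℤ[X]) * X ^ j * Ppoly ((d : ℤ) + d' + 1 - 2 * j) i := by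
  set q := d / i with hq
  set r := d % i with hrdef
  set q' := d' / i with hq'
  set r' := d' % i with hrdef'
  have hd : d = i * q + r := (Nat.div_add_mod d i).symm
  have hd' : d' = i * q' + r' := (Nat.div_add_mod d' i).symm
  have hr : r < i := Nat.mod_lt _ (by omega)
  have hr' : r' < i := Nat.mod_lt _ (by omega)
  have hrd : r ≤ d := Nat.mod_le d i
  have hrd' : r' ≤ d' := Nat.mod_le d' i
  set Q := q + q' with hQ
  set M := min r r' + 1 with hM
  set E := r + r' + 2 - i with hE
  set N := (d + d' + 2) / 2 with hN
  have hMN : M ≤ N := by omega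
  have hEM : E ≤ M := by omega
  have hdz : (d : ℤ) = (i : ℤ) * q + r := by exact_mod_cast congrArg (Nat.cast : ℕ → ℤ) hd
  have hdz' : (d' : ℤ) = (i : ℤ) * q' + r' := by exact_mod_cast congrArg (Nat.cast : ℕ → ℤ) hd'
  have T : ∀ j : ℕ, j ≤ M → r + r' + 2 - 2 * j ≤ i →
      Ppoly ((d : ℤ) + d' + 1 - 2 * j) i
        = S (i + 1) ^ Q * S (r + r' + 3 - 2 * j) := by
    intro j hjM hsj
    have h2j : 2 * j ≤ r + r' + 2 := by omega
    have harg : (d : ℤ) + d' + 1 - 2 * j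
        = (Q : ℤ) * i + ((r + r' + 2 - 2 * j : ℕ) : ℤ) - 1 := by
      rw [Nat.cast_sub h2j, hdz, hdz']
      push_cast [hQ]
      ring
    rw [harg, Ppoly_eq i Q _ hi hsj,
      show r + r' + 2 - 2 * j + 1 = r + r' + 3 - 2 * j from by omega]
  refine ⟨fun j => if j = 0 ∨ (E < j ∧ j ≤ M) then 1 else 0, ?_⟩
  have hfilter : (range (N + 1)).filter (fun j => j = 0 ∨ (E < j ∧ j ≤ M))
      = insert 0 (Ioc E M) := by
    ext x
    simp only [Finset.mem_filter, Finset.mem_range, Finset.mem_insert, Finset.mem_Ioc]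
    omega
  simp only [Nat.cast_ite, Nat.cast_one, Nat.cast_zero, ite_mul, one_mul, zero_mul]
  rw [← Finset.sum_filter, hfilter, Finset.sum_insert (by simp)]
  -- identify the Ioc sum termwise
  have hIoc : ∑ j ∈ Ioc E M, X ^ j * Ppoly ((d : ℤ) + d' + 1 - 2 * j) i
      = ∑ j ∈ Ioc E M, X ^ j * (S (i + 1) ^ Q * S (r + r' + 3 - 2 * j)) :=
    Finset.sum_congr rfl fun j hj => by
      rw [Finset.mem_Ioc] at hj
      rw [T j hj.2 (by omega)]
  rw [hIoc]
  -- rewrite the left-hand side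
  have hL : Ppoly (d : ℤ) i * Ppoly (d' : ℤ) i
      = ∑ j ∈ range (M + 1), X ^ j * (S (i + 1) ^ Q * S (r + r' + 3 - 2 * j)) := by
    rw [Ppoly_nat, Ppoly_nat, ← hq, ← hrdef, ← hq', ← hrdef',
      show S (i+1) ^ q * S (r+2) * (S (i+1) ^ q' * S (r'+2))
        = S (i+1) ^ Q * (S (r+2) * S (r'+2)) from by rw [hQ, pow_add]; ring,
      S_mul, show min (r+2) (r'+2) = M + 1 from by omega, Finset.mul_sum]
    apply Finset.sum_congr rfl
    intro j hj
    rw [show r + 2 + (r' + 2) - 1 - 2 * j = r + r' + 3 - 2 * j from by omega]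
    ring
  rw [hL]
  by_cases hcase : r + r' + 2 ≤ i
  · -- small case: no wraparound
    have hE0 : E = 0 := by omega
    have h0 : X ^ 0 * Ppoly ((d : ℤ) + d' + 1 - 2 * ((0:ℕ):ℤ)) i
        = X ^ 0 * (S (i + 1) ^ Q * S (r + r' + 3 - 2 * 0)) := by
      rw [T 0 (by omega) (by omega)]
    rw [h0, hE0,
      show range (M + 1) = insert 0 (Ioc 0 M) from by ext x; simp,
      Finset.sum_insert (by simp)]
  · -- wraparound case
    have hEi : E + i = r + r' + 2 := by omega
    have h0 : X ^ 0 * Ppoly ((d : ℤ) + d' + 1 - 2 * ((0:ℕ):ℤ)) i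
        = ∑ k ∈ range (E + 1), X ^ k * (S (i + 1) ^ Q * S (r + r' + 3 - 2 * k)) := by
      have harg : (d : ℤ) + d' + 1 - 2 * ((0:ℕ):ℤ) = ((Q + 1 : ℕ) : ℤ) * i + ((E : ℕ) : ℤ) - 1 := by
        rw [hE, Nat.cast_sub (by omega : i ≤ r + r' + 2), hdz, hdz']
        push_cast [hQ]
        ring
      rw [harg, Ppoly_eq i (Q + 1) E hi (by omega), pow_zero, one_mul, pow_succ, mul_assoc,
        S_mul, show min (i + 1) (E + 1) = E + 1 from by omega, Finset.mul_sum]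
      apply Finset.sum_congr rfl
      intro k hk
      rw [show i + 1 + (E + 1) - 1 - 2 * k = r + r' + 3 - 2 * k from by omega]
      ring
    rw [h0,
      show Ioc E M = Ico (E + 1) (M + 1) from by ext x; simp,
      show range (M + 1) = Ico 0 (M + 1) from by rw [Finset.range_eq_Ico],
      show (range (E + 1) : Finset ℕ) = Ico 0 (E + 1) from by rw [Finset.range_eq_Ico],
      Finset.sum_Ico_consecutive _ (by omega : (0:ℕ) ≤ E + 1) (by omega : E + 1 ≤ M + 1)]
end

section
/- Let d and k be integers with 2 ≤ k ≤ d − 1. Then, in ℤ, (k+1)·a(k,d) = 2(2d−1)·a(k−1,d−1) − b(k−1,d−1), where a(k,d) = 2^{k−1}(C(d−1,k) + C(d,k)) and b(k,d) = 2^k((d+1)(C(d−1,k) + C(d,k)) − 2·C(d+1,k+1)). -/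
/-- `a(k,d) = 2^{k-1}·(C(d-1,k) + C(d,k))`, the coefficient of `n` in
`f_k(S(1,d,n)) = a(k,d)·n - b(k,d)`. -/
def aCoef (k d : ℕ) : ℤ :=
  2 ^ (k - 1) * (((d - 1).choose k : ℤ) + (d.choose k : ℤ))

/-- `b(k,d) = 2^k·((d+1)·(C(d-1,k) + C(d,k)) - 2·C(d+1,k+1))`, the constant term in
`f_k(S(1,d,n)) = a(k,d)·n - b(k,d)`. -/
def bCoef (k d : ℕ) : ℤ :=
  2 ^ k * (((d : ℤ) + 1) * (((d - 1).choose k : ℤ) + (d.choose k : ℤ)) -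
    2 * ((d + 1).choose (k + 1) : ℤ))

theorem tst (m t : ℕ) :
    ((m:ℤ) + 2 + 1) * (2 ^ (m + 1) * (((m + 2 + t).choose (m + 2) : ℤ) + ((m + 3 + t).choose (m + 2) : ℤ))) =
      2 * (2 * ((m:ℤ) + 3 + t) - 1) * (2 ^ m * (((m + 1 + t).choose (m + 1) : ℤ) + ((m + 2 + t).choose (m + 1) : ℤ))) -
      2 ^ (m + 1) * ((((m:ℤ) + 2 + t) + 1) * (((m + 1 + t).choose (m + 1) : ℤ) + ((m + 2 + t).choose (m + 1) : ℤ)) -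
        2 * ((m + 3 + t).choose (m + 2) : ℤ)) := by
  have h1 := Nat.add_one_mul_choose_eq (m + 1 + t) (m + 1)
  have h2 := Nat.add_one_mul_choose_eq (m + 2 + t) (m + 1)
  have h3 := Nat.choose_succ_succ (m + 2 + t) (m + 1)
  simp only [Nat.succ_eq_add_one] at h1 h2 h3
  have e1 : m + 1 + t + 1 = m + 2 + t := by omega
  have e2 : m + 2 + t + 1 = m + 3 + t := by omega
  have e3 : m + 1 + 1 = m + 2 := by omega
  simp only [e1, e2, e3] at h1 h2 h3
  have h1' : ((m + 2 + t) * ((m + 1 + t).choose (m + 1)) : ℤ)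
      = (((m + 2 + t).choose (m + 2)) * (m + 2) : ℤ) := by exact_mod_cast h1
  have h2' : ((m + 3 + t) * ((m + 2 + t).choose (m + 1)) : ℤ)
      = (((m + 3 + t).choose (m + 2)) * (m + 2) : ℤ) := by exact_mod_cast h2
  have h3' : (((m + 3 + t).choose (m + 2)) : ℤ)
      = (((m + 2 + t).choose (m + 1)) : ℤ) + (((m + 2 + t).choose (m + 2)) : ℤ) := by
    exact_mod_cast h3
  push_cast at h1' h2' h3'
  linear_combination (-(2:ℤ)^(m+1)) * (h1' + h2' + h3')


/-- for integers `2 ≤ k ≤ d - 1`, in `ℤ`,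
`(k+1)·a(k,d) = 2(2d-1)·a(k-1,d-1) - b(k-1,d-1)`. -/
theorem aCoef_recurrence (k d : ℕ) (hk : 2 ≤ k) (hkd : k + 1 ≤ d) :
    ((k : ℤ) + 1) * aCoef k d =
      2 * (2 * (d : ℤ) - 1) * aCoef (k - 1) (d - 1) - bCoef (k - 1) (d - 1) := by
  obtain ⟨m, rfl⟩ : ∃ m, k = m + 2 := ⟨k - 2, by omega⟩
  obtain ⟨t, rfl⟩ : ∃ t, d = m + 3 + t := ⟨d - (m + 3), by omega⟩
  simp only [aCoef, bCoef]
  have e1 : m + 3 + t - 1 = m + 2 + t := by omega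
  have e2 : m + 2 - 1 = m + 1 := by omega
  have e3 : m + 2 + t - 1 = m + 1 + t := by omega
  have e4 : m + 2 + t + 1 = m + 3 + t := by omega
  have e5 : m + 1 + 1 = m + 2 := by omega
  rw [e1, e2, e3, e4, e5]
  have h := tst m t
  push_cast at h ⊢
  linear_combination h
end

section
/- Let d and k be integers with 2 ≤ k ≤ d − 1. Then, in ℤ, (k+1)·b(k,d) = 4(d+1)(d−1)·a(k−1,d−1), where a(k,d) = 2^{k−1}(C(d−1,k) + C(d,k)) and b(k,d) = 2^k((d+1)(C(d−1,k) + C(d,k)) − 2·C(d+1,k+1)). -/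
/-- for integers `2 ≤ k ≤ d - 1`, in `ℤ`,
`(k+1)·b(k,d) = 4(d+1)(d-1)·a(k-1,d-1)`. -/
theorem bCoef_recurrence (k d : ℕ) (hk : 2 ≤ k) (hkd : k + 1 ≤ d) :
    ((k : ℤ) + 1) * bCoef k d =
      4 * ((d : ℤ) + 1) * ((d : ℤ) - 1) * aCoef (k - 1) (d - 1) := by
  obtain ⟨k', rfl⟩ : ∃ k', k = k' + 2 := ⟨k - 2, by omega⟩
  obtain ⟨d', rfl⟩ : ∃ d', d = d' + 3 := ⟨d - 3, by omega⟩
  have hA := Nat.add_one_mul_choose_eq (d' + 3) (k' + 2)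
  have hB := Nat.add_one_mul_choose_eq (d' + 1) (k' + 1)
  have hC := Nat.add_one_mul_choose_eq (d' + 2) (k' + 1)
  have hD := Nat.choose_succ_succ (d' + 2) (k' + 1)
  have hA' : ((d':ℤ) + 4) * ((d' + 3).choose (k' + 2) : ℤ)
      = ((d' + 3 + 1).choose (k' + 2 + 1) : ℤ) * ((k':ℤ) + 3) := by exact_mod_cast hA
  have hB' : ((d':ℤ) + 2) * ((d' + 1).choose (k' + 1) : ℤ)
      = ((d' + 2).choose (k' + 2) : ℤ) * ((k':ℤ) + 2) := by exact_mod_cast hB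
  have hC' : ((d':ℤ) + 3) * ((d' + 2).choose (k' + 1) : ℤ)
      = ((d' + 3).choose (k' + 2) : ℤ) * ((k':ℤ) + 2) := by exact_mod_cast hC
  have hD' : ((d' + 3).choose (k' + 2) : ℤ)
      = ((d' + 2).choose (k' + 1) : ℤ) + ((d' + 2).choose (k' + 2) : ℤ) := by
    exact_mod_cast hD
  simp only [aCoef, bCoef]
  have e1 : d' + 3 - 1 = d' + 2 := rfl
  have e2 : k' + 2 - 1 = k' + 1 := rfl
  have e3 : d' + 2 - 1 = d' + 1 := rfl
  have e4 : k' + 1 - 1 = k' := rfl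
  rw [e1, e2, e3, e4]
  push_cast
  linear_combination (4 * 2 ^ k' : ℤ) *
    (2 * hA' - ((d':ℤ) + 4) * hB' - ((d':ℤ) + 4) * hC' - ((d':ℤ) + 4) * hD')
end
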